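/- Let G be a countable group generated by a finite symmetric set S, let H ≤ G, and let n ≥ 1 be such that A(n,S) ≠ ∅. For a word w = (a_1,…,a_n) ∈ A(n,S) let T(w) = {t ∈ {1,…,n} : a_t ∈ H^{w(t−1)}} (the set of times at which the walk does not change H-coset, where w(0) = 1). Then log|A_H(n,S)| − log|A(n,S)| ≥ (1/|A(n,S)|) · Σ_{w∈A(n,S)} Σ_{t∈T(w)} (−log ρ(H^{w(t)}, H^{w(t)} ∩ S)). -/

import Mathlib

open Filter
open scoped Classical

noncomputable section

variable {G : Type*} [Group G]

/-- Words of length `n` with letters in `S` whose product lies in the subgroup `H`.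
With `H = ⊥` this is the set `A(n,S)` of walks returning to the identity after `n` steps;
for general `H` it is `A_H(n,S)`. -/
def wordsIn (S : Finset G) (H : Subgroup G) (n : ℕ) : Finset (Fin n → G) :=
  (Fintype.piFinset fun _ => S).filter fun w => (List.ofFn w).prod ∈ H

/-- `specRad S H` is the spectral radius of the Schreier graph of `H\G` w.r.t. `S`:
`lim (|A_H(2n,S)|/|S|^(2n))^(1/(2n))` (stated via `limsup`; the limit exists).
With `H = ⊥` this is the spectral radius `ρ(⟨S⟩,S)` of the Cayley graph of the group
generated by `S`; by convention it equals `1` when `S` is empty (trivial group). -/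
def specRad (S : Finset G) (H : Subgroup G) : ℝ :=
  if S.Nonempty then
    Filter.limsup
      (fun n : ℕ =>
        (((wordsIn S H (2 * n)).card : ℝ) / (S.card : ℝ) ^ (2 * n)) ^ ((1 : ℝ) / (2 * (n : ℝ))))
      Filter.atTop
  else 1

/-- `conjSubgroup g H = H^g = g⁻¹ H g`. -/
def conjSubgroup (g : G) (H : Subgroup G) : Subgroup G :=
  Subgroup.map (MulAut.conj g⁻¹).toMonoidHom H

/-- `prefixProd w i = w(i) = a₁⋯aᵢ`, the position of the walk `w` after `i` steps. -/
def prefixProd {n : ℕ} (w : Fin n → G) (i : ℕ) : G := ((List.ofFn w).take i).prod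

/-- `muMass S n A = μₙ(A) = (1/(n|A(n,S)|)) Σ_{w ∈ A(n,S)} #{1 ≤ i ≤ n : w(i) ∈ A}`,
the expected proportion of time a uniformly random recurrent walk of length `n` spends in `A`. -/
def muMass (S : Finset G) (n : ℕ) (A : Set G) : ℝ :=
  (1 / ((n : ℝ) * ((wordsIn S ⊥ n).card : ℝ))) *
    ∑ w ∈ wordsIn S ⊥ n, (((Finset.Icc 1 n).filter fun i => prefixProd w i ∈ A).card : ℝ)

namespace SRP
set_option linter.unusedSectionVars false

/-- inner product on finitely supported functions -/
def ip (f g : G →₀ ℝ) : ℝ := ∑ x ∈ f.support, f x * g x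

lemma ip_eq_sum {f g : G →₀ ℝ} {u : Finset G} (h : f.support ⊆ u) :
    ip f g = ∑ x ∈ u, f x * g x := by
  refine Finset.sum_subset h fun x _ hx => ?_
  rw [Finsupp.notMem_support_iff.mp hx, zero_mul]

lemma ip_comm (f g : G →₀ ℝ) : ip f g = ip g f := by
  rw [ip_eq_sum (Finset.subset_union_left (s₂ := g.support)),
    ip_eq_sum (Finset.subset_union_right (s₁ := f.support))]
  exact Finset.sum_congr rfl fun x _ => mul_comm _ _

lemma ip_add_left (f g h : G →₀ ℝ) : ip (f + g) h = ip f h + ip g h := by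
  rw [ip_eq_sum (u := f.support ∪ g.support) Finsupp.support_add,
    ip_eq_sum (Finset.subset_union_left (s₂ := g.support)),
    ip_eq_sum (Finset.subset_union_right (s₁ := f.support)), ← Finset.sum_add_distrib]
  exact Finset.sum_congr rfl fun x _ => by simp [add_mul]

lemma ip_smul_left (c : ℝ) (f g : G →₀ ℝ) : ip (c • f) g = c * ip f g := by
  rcases eq_or_ne c 0 with rfl | hc
  · simp [ip]
  · rw [ip_eq_sum (u := f.support) (by rw [Finsupp.support_smul_eq hc]),
      ip, Finset.mul_sum]
    exact Finset.sum_congr rfl fun x _ => by simp [mul_assoc]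

lemma ip_sum_left {ι : Type*} (s : Finset ι) (f : ι → (G →₀ ℝ)) (h : G →₀ ℝ) :
    ip (∑ i ∈ s, f i) h = ∑ i ∈ s, ip (f i) h := by
  classical
  induction s using Finset.induction with
  | empty => simp [ip]
  | insert _ _ hx ih => rw [Finset.sum_insert hx, ip_add_left, ih, Finset.sum_insert hx]

lemma ip_nonneg (f : G →₀ ℝ) : 0 ≤ ip f f :=
  Finset.sum_nonneg fun x _ => mul_self_nonneg _

lemma ip_single_right (f : G →₀ ℝ) (y : G) : ip f (Finsupp.single y 1) = f y := by
  rcases Finset.decidableMem y f.support |>.em with hy | hy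
  · rw [ip, Finset.sum_eq_single y (fun x _ hxy => by
      rw [Finsupp.single_apply, if_neg (fun h => hxy h.symm), mul_zero]) (fun h => absurd hy h)]
    simp
  · have : f y = 0 := Finsupp.notMem_support_iff.mp hy
    rw [ip, Finset.sum_eq_zero, this]
    intro x hx
    have : x ≠ y := fun h => hy (h ▸ hx)
    simp [Finsupp.single_apply, this.symm]

lemma ip_cauchy (f g : G →₀ ℝ) : ip f g ^ 2 ≤ ip f f * ip g g := by
  rw [ip_eq_sum (u := f.support ∪ g.support) Finset.subset_union_left,
    ip_eq_sum (u := f.support ∪ g.support) Finset.subset_union_left,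
    ip_eq_sum (u := f.support ∪ g.support) Finset.subset_union_right]
  calc (∑ x ∈ f.support ∪ g.support, f x * g x) ^ 2
      ≤ (∑ x ∈ f.support ∪ g.support, f x ^ 2) * ∑ x ∈ f.support ∪ g.support, g x ^ 2 :=
        Finset.sum_mul_sq_le_sq_mul_sq _ _ _
    _ = (∑ x ∈ f.support ∪ g.support, f x * f x) * ∑ x ∈ f.support ∪ g.support, g x * g x := by
        simp [sq]

-- new part
lemma ip_sum_right {ι : Type*} (s : Finset ι) (f : ι → (G →₀ ℝ)) (h : G →₀ ℝ) :
    ip h (∑ i ∈ s, f i) = ∑ i ∈ s, ip h (f i) := by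
  rw [ip_comm, ip_sum_left]
  exact Finset.sum_congr rfl fun i _ => ip_comm _ _

lemma ip_equivMapDomain (e : G ≃ G) (f g : G →₀ ℝ) :
    ip (Finsupp.equivMapDomain e f) (Finsupp.equivMapDomain e g) = ip f g := by
  have hs : (Finsupp.equivMapDomain e f).support = f.support.map e.toEmbedding := rfl
  rw [ip, hs, Finset.sum_map]
  exact Finset.sum_congr rfl fun x _ => by simp

def lsh (s : G) (f : G →₀ ℝ) : G →₀ ℝ := Finsupp.equivMapDomain (Equiv.mulLeft s) f

def rsh (s : G) (f : G →₀ ℝ) : G →₀ ℝ := Finsupp.equivMapDomain (Equiv.mulRight s) f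

@[simp] lemma lsh_apply (s : G) (f : G →₀ ℝ) (x : G) : lsh s f x = f (s⁻¹ * x) := by
  simp [lsh]

@[simp] lemma rsh_apply (s : G) (f : G →₀ ℝ) (x : G) : rsh s f x = f (x * s⁻¹) := by
  simp [rsh]

lemma lsh_single (s g : G) (c : ℝ) : lsh s (Finsupp.single g c) = Finsupp.single (s * g) c := by
  simp [lsh]

lemma rsh_single (s g : G) (c : ℝ) : rsh s (Finsupp.single g c) = Finsupp.single (g * s) c := by
  simp [rsh]

lemma lsh_add (s : G) (f g : G →₀ ℝ) : lsh s (f + g) = lsh s f + lsh s g := by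
  ext x; simp

lemma lsh_smul (s : G) (c : ℝ) (f : G →₀ ℝ) : lsh s (c • f) = c • lsh s f := by
  ext x; simp

lemma lsh_rsh (s t : G) (f : G →₀ ℝ) : lsh s (rsh t f) = rsh t (lsh s f) := by
  ext x; simp [mul_assoc]

lemma ip_lsh (s : G) (f g : G →₀ ℝ) : ip (lsh s f) (lsh s g) = ip f g :=
  ip_equivMapDomain _ _ _

lemma ip_rsh (s : G) (f g : G →₀ ℝ) : ip (rsh s f) (rsh s g) = ip f g :=
  ip_equivMapDomain _ _ _

lemma lsh_lsh (s t : G) (f : G →₀ ℝ) : lsh s (lsh t f) = lsh (s * t) f := by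
  ext x; simp [mul_assoc]

lemma ip_lsh_left (s : G) (f g : G →₀ ℝ) : ip (lsh s f) g = ip f (lsh s⁻¹ g) := by
  have : lsh s (lsh s⁻¹ g) = g := by ext x; simp
  rw [← this, ip_lsh, this]

def opT (F : Finset G) (f : G →₀ ℝ) : G →₀ ℝ := ∑ s ∈ F, lsh s f

lemma opT_add (F : Finset G) (f g : G →₀ ℝ) : opT F (f + g) = opT F f + opT F g := by
  rw [opT, opT, opT, ← Finset.sum_add_distrib]
  exact Finset.sum_congr rfl fun s _ => lsh_add s f g

lemma opT_smul (F : Finset G) (c : ℝ) (f : G →₀ ℝ) : opT F (c • f) = c • opT F f := by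
  rw [opT, opT, Finset.smul_sum]
  exact Finset.sum_congr rfl fun s _ => lsh_smul s c f

lemma opT_rsh (F : Finset G) (t : G) (f : G →₀ ℝ) : opT F (rsh t f) = rsh t (opT F f) := by
  rw [opT, opT]
  have : rsh t (∑ s ∈ F, lsh s f) = ∑ s ∈ F, rsh t (lsh s f) := by
    ext x; rw [rsh_apply, Finset.sum_apply', Finset.sum_apply']
    exact Finset.sum_congr rfl fun s _ => (rsh_apply ..).symm
  rw [this]
  exact Finset.sum_congr rfl fun s _ => lsh_rsh s t f

lemma ip_opT (F : Finset G) (hF : ∀ s ∈ F, s⁻¹ ∈ F) (f g : G →₀ ℝ) :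
    ip (opT F f) g = ip f (opT F g) := by
  rw [opT, opT, ip_sum_left, ip_sum_right]
  refine Finset.sum_nbij' (fun s => s⁻¹) (fun s => s⁻¹) (fun s hs => hF s hs)
    (fun s hs => hF s hs) (fun s _ => inv_inv s) (fun s _ => inv_inv s) ?_
  intro s _
  rw [ip_lsh_left]

lemma iter_opT_add (F : Finset G) (m : ℕ) (f g : G →₀ ℝ) :
    (opT F)^[m] (f + g) = (opT F)^[m] f + (opT F)^[m] g := by
  induction m generalizing f g with
  | zero => simp
  | succ m ih => rw [Function.iterate_succ_apply, Function.iterate_succ_apply,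
      Function.iterate_succ_apply, opT_add, ih]

lemma iter_opT_smul (F : Finset G) (m : ℕ) (c : ℝ) (f : G →₀ ℝ) :
    (opT F)^[m] (c • f) = c • (opT F)^[m] f := by
  induction m generalizing f with
  | zero => simp
  | succ m ih => rw [Function.iterate_succ_apply, Function.iterate_succ_apply, opT_smul, ih]

lemma iter_opT_rsh (F : Finset G) (m : ℕ) (t : G) (f : G →₀ ℝ) :
    (opT F)^[m] (rsh t f) = rsh t ((opT F)^[m] f) := by
  induction m generalizing f with
  | zero => simp
  | succ m ih => rw [Function.iterate_succ_apply, Function.iterate_succ_apply, opT_rsh, ih]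

lemma ip_iter_opT (F : Finset G) (hF : ∀ s ∈ F, s⁻¹ ∈ F) (m : ℕ) (f g : G →₀ ℝ) :
    ip ((opT F)^[m] f) g = ip f ((opT F)^[m] g) := by
  induction m generalizing f g with
  | zero => simp
  | succ m ih => rw [Function.iterate_succ_apply, Function.iterate_succ_apply', ih, ip_opT F hF]

-- part 3
lemma lsh_sum {ι : Type*} (s : G) (t : Finset ι) (f : ι → (G →₀ ℝ)) :
    lsh s (∑ i ∈ t, f i) = ∑ i ∈ t, lsh s (f i) := by
  ext x
  rw [Finset.sum_apply']
  show (∑ i ∈ t, f i) (s⁻¹ * x) = _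
  rw [Finset.sum_apply']
  rfl

def mixvec : (n : ℕ) → (Fin n → Finset G) → (G →₀ ℝ)
  | 0, _ => Finsupp.single 1 1
  | n + 1, A => opT (A 0) (mixvec n (fun i => A i.succ))

lemma mixvec_eq_sum (n : ℕ) (A : Fin n → Finset G) :
    mixvec n A = ∑ w ∈ Fintype.piFinset A, Finsupp.single ((List.ofFn w).prod) 1 := by
  induction n with
  | zero =>
    simp [mixvec]
  | succ n ih =>
    rw [mixvec, ih]
    have hre : ∑ w ∈ Fintype.piFinset A, Finsupp.single ((List.ofFn w).prod) (1:ℝ)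
        = ∑ p ∈ (A 0) ×ˢ Fintype.piFinset (fun i => A i.succ),
            Finsupp.single ((List.ofFn (Fin.cons p.1 p.2)).prod) (1:ℝ) := by
      refine Finset.sum_nbij' (fun w => (w 0, fun i => w i.succ)) (fun p => Fin.cons p.1 p.2)
        ?_ ?_ ?_ ?_ ?_
      · intro w hw
        rw [Fintype.mem_piFinset] at hw
        exact Finset.mem_product.mpr ⟨hw 0, Fintype.mem_piFinset.mpr fun i => hw i.succ⟩
      · intro p hp
        obtain ⟨h1, h2⟩ := Finset.mem_product.mp hp
        refine Fintype.mem_piFinset.mpr fun i => ?_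
        refine Fin.cases ?_ ?_ i
        · simpa using h1
        · intro j; simpa using Fintype.mem_piFinset.mp h2 j
      · intro w _; exact Fin.cons_self_tail w
      · intro p _; simp
      · intro w _
        exact congrArg (fun z => Finsupp.single ((List.ofFn z).prod) (1:ℝ)) (Fin.cons_self_tail w).symm
    rw [hre, Finset.sum_product, opT]
    refine Finset.sum_congr rfl fun s _ => ?_
    rw [lsh_sum]
    refine Finset.sum_congr rfl fun w' _ => ?_
    rw [lsh_single]
    congr 1
    rw [List.ofFn_succ]
    simp

lemma mixvec_apply (n : ℕ) (A : Fin n → Finset G) (g : G) :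
    mixvec n A g
      = (((Fintype.piFinset A).filter fun w => (List.ofFn w).prod = g).card : ℝ) := by
  rw [mixvec_eq_sum, Finset.sum_apply', ← Finset.sum_boole]
  refine Finset.sum_congr rfl fun w _ => ?_
  rw [Finsupp.single_apply]

lemma mixvec_nonneg (n : ℕ) (A : Fin n → Finset G) (g : G) : 0 ≤ mixvec n A g := by
  rw [mixvec_apply]; positivity

lemma mixvec_const (F : Finset G) (n : ℕ) :
    mixvec n (fun _ : Fin n => F) = (opT F)^[n] (Finsupp.single 1 1) := by
  induction n with
  | zero => rfl
  | succ n ih => rw [Function.iterate_succ_apply']; exact congrArg (opT F) ih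

lemma mixvec_const_one (F : Finset G) (n : ℕ) :
    mixvec n (fun _ : Fin n => F) 1 = ((wordsIn F ⊥ n).card : ℝ) := by
  have h : wordsIn F ⊥ n = (Fintype.piFinset fun _ => F).filter fun w => (List.ofFn w).prod = 1 := by
    rw [wordsIn]; exact Finset.filter_congr fun w _ => by rw [Subgroup.mem_bot]
  rw [mixvec_apply, h]

-- part 4
section Fekete
variable (F : Finset G)

/-- the vector of walk counts -/
def wv (m : ℕ) : G →₀ ℝ := (opT F)^[m] (Finsupp.single 1 1)

lemma wv_nonneg (m : ℕ) (x : G) : 0 ≤ wv F m x := by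
  rw [wv, ← mixvec_const]; exact mixvec_nonneg _ _ _

lemma wv_one (m : ℕ) : wv F m 1 = ((wordsIn F ⊥ m).card : ℝ) := by
  rw [wv, ← mixvec_const]; exact mixvec_const_one _ _

lemma ip_point_le {f g : G →₀ ℝ} (hf : ∀ x, 0 ≤ f x) (hg : ∀ x, 0 ≤ g x) (y : G) :
    f y * g y ≤ ip f g := by
  have hnn : ∀ x ∈ f.support, 0 ≤ f x * g x := fun x _ => mul_nonneg (hf x) (hg x)
  rcases eq_or_ne (f y) 0 with h0 | h0
  · rw [h0, zero_mul]
    exact Finset.sum_nonneg hnn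
  · exact Finset.single_le_sum hnn (Finsupp.mem_support_iff.mpr h0)

variable (hsym : ∀ s ∈ F, s⁻¹ ∈ F)
include hsym

lemma ip_wv (a b : ℕ) : ip (wv F a) (wv F b) = ((wordsIn F ⊥ (a + b)).card : ℝ) := by
  rw [wv, wv, ip_iter_opT F hsym, ← Function.iterate_add_apply, ← wv, ← wv_one F (a + b)]
  rw [ip_comm, ip_single_right]

lemma card_supermul (a b : ℕ) :
    ((wordsIn F ⊥ a).card : ℝ) * ((wordsIn F ⊥ b).card : ℝ)
      ≤ ((wordsIn F ⊥ (a + b)).card : ℝ) := by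
  rw [← ip_wv F hsym, ← wv_one, ← wv_one]
  exact ip_point_le (wv_nonneg F a) (wv_nonneg F b) 1

omit hsym in
lemma card_words_le (m : ℕ) : ((wordsIn F ⊥ m).card : ℝ) ≤ (F.card : ℝ) ^ m := by
  have h1 : (wordsIn F ⊥ m).card ≤ (Fintype.piFinset fun _ : Fin m => F).card :=
    Finset.card_filter_le _ _
  have h2 : (Fintype.piFinset fun _ : Fin m => F).card = F.card ^ m := by
    rw [Fintype.card_piFinset]
    simp
  calc ((wordsIn F ⊥ m).card : ℝ) ≤ ((Fintype.piFinset fun _ : Fin m => F).card : ℝ) := by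
        exact_mod_cast h1
    _ = (F.card : ℝ) ^ m := by rw [h2]; push_cast; rfl

variable (hne : F.Nonempty)
include hne

omit hsym in
lemma F_card_pos' : (0:ℝ) < F.card := by exact_mod_cast Finset.card_pos.mpr hne

omit hsym in
lemma wv_exists_pos (m : ℕ) : ∃ g : G, 1 ≤ wv F m g := by
  obtain ⟨s, hs⟩ := hne
  set w : Fin m → G := fun _ => s with hw
  refine ⟨(List.ofFn w).prod, ?_⟩
  rw [wv, ← mixvec_const, mixvec_apply]
  have hmem : w ∈ (Fintype.piFinset fun _ : Fin m => F).filter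
      fun w' => (List.ofFn w').prod = (List.ofFn w).prod := by
    refine Finset.mem_filter.mpr ⟨Fintype.mem_piFinset.mpr fun i => hs, rfl⟩
  have : 0 < ((Fintype.piFinset fun _ : Fin m => F).filter
      fun w' => (List.ofFn w').prod = (List.ofFn w).prod).card :=
    Finset.card_pos.mpr ⟨w, hmem⟩
  exact_mod_cast this

lemma card_words_even_pos (m : ℕ) : 0 < ((wordsIn F ⊥ (m + m)).card : ℝ) := by
  rw [← ip_wv F hsym]
  obtain ⟨g, hg⟩ := wv_exists_pos F hne m
  have := ip_point_le (wv_nonneg F m) (wv_nonneg F m) g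
  nlinarith

/-- the subadditive sequence -/
def useq (j : ℕ) : ℝ := -Real.log ((wordsIn F ⊥ (2 * j)).card : ℝ)

lemma useq_subadd : Subadditive (useq F) := by
  intro a b
  have ha : 0 < ((wordsIn F ⊥ (2 * a)).card : ℝ) := by
    have := card_words_even_pos F hsym hne a; rw [two_mul]; exact this
  have hb : 0 < ((wordsIn F ⊥ (2 * b)).card : ℝ) := by
    have := card_words_even_pos F hsym hne b; rw [two_mul]; exact this
  have hsup := card_supermul F hsym (2 * a) (2 * b)
  have h2 : 2 * a + 2 * b = 2 * (a + b) := by ring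
  rw [h2] at hsup
  have hlog : Real.log ((wordsIn F ⊥ (2 * a)).card : ℝ)
      + Real.log ((wordsIn F ⊥ (2 * b)).card : ℝ)
      ≤ Real.log ((wordsIn F ⊥ (2 * (a + b))).card : ℝ) := by
    rw [← Real.log_mul (ne_of_gt ha) (ne_of_gt hb)]
    exact Real.log_le_log (by positivity) hsup
  simp only [useq]
  linarith

lemma useq_div_ge (j : ℕ) : -2 * Real.log F.card ≤ useq F j / j := by
  rcases Nat.eq_zero_or_pos j with rfl | hj
  · simp [useq]
    have : (0:ℝ) ≤ Real.log F.card := by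
      have : (1:ℝ) ≤ F.card := by
        have := F_card_pos' F hne; exact_mod_cast Finset.card_pos.mpr hne
      exact Real.log_nonneg this
    linarith
  · have hpos : 0 < ((wordsIn F ⊥ (2 * j)).card : ℝ) := by
      have := card_words_even_pos F hsym hne j; rw [two_mul]; exact this
    have hle : ((wordsIn F ⊥ (2 * j)).card : ℝ) ≤ (F.card : ℝ) ^ (2 * j) :=
      card_words_le F (2 * j)
    have hlog : Real.log ((wordsIn F ⊥ (2 * j)).card : ℝ) ≤ (2 * j) * Real.log F.card := by
      calc Real.log ((wordsIn F ⊥ (2 * j)).card : ℝ) ≤ Real.log ((F.card : ℝ) ^ (2 * j)) :=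
            Real.log_le_log hpos hle
        _ = (2 * j) * Real.log F.card := by rw [Real.log_pow]; push_cast; ring
    have hj' : (0:ℝ) < j := by exact_mod_cast hj
    rw [useq, le_div_iff₀ hj']
    nlinarith

lemma useq_bddBelow : BddBelow (Set.range fun j => useq F j / j) := by
  refine ⟨-2 * Real.log F.card, ?_⟩
  rintro x ⟨j, rfl⟩
  exact useq_div_ge F hsym hne j

lemma specRad_eq : specRad F ⊥
    = Real.exp (-((useq_subadd F hsym hne).lim / 2) - Real.log F.card) := by
  rw [specRad, if_pos hne]
  set L := (useq_subadd F hsym hne).lim with hL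
  have htend0 : Tendsto (fun j => useq F j / j) atTop (nhds L) :=
    (useq_subadd F hsym hne).tendsto_lim (useq_bddBelow F hsym hne)
  have htend1 : Tendsto (fun j : ℕ => Real.exp (-(useq F j / j / 2) - Real.log F.card))
      atTop (nhds (Real.exp (-(L / 2) - Real.log F.card))) := by
    refine Real.continuous_exp.continuousAt.tendsto.comp ?_
    have : Tendsto (fun j : ℕ => -(useq F j / j / 2) - Real.log F.card) atTop
        (nhds (-(L / 2) - Real.log F.card)) := by
      exact Tendsto.sub_const ((htend0.div_const 2).neg) _
    exact this
  have heq : ∀ j : ℕ, 1 ≤ j →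
      (((wordsIn F ⊥ (2 * j)).card : ℝ) / (F.card : ℝ) ^ (2 * j)) ^ ((1 : ℝ)/(2 * (j : ℝ)))
      = Real.exp (-(useq F j / j / 2) - Real.log F.card) := by
    intro j hj
    have hj' : (0:ℝ) < j := by exact_mod_cast hj
    have hpos : 0 < ((wordsIn F ⊥ (2 * j)).card : ℝ) := by
      have := card_words_even_pos F hsym hne j; rw [two_mul]; exact this
    have hFc := F_card_pos' F hne
    have hbase : 0 < ((wordsIn F ⊥ (2 * j)).card : ℝ) / (F.card : ℝ) ^ (2 * j) := by
      positivity
    rw [Real.rpow_def_of_pos hbase]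
    congr 1
    rw [Real.log_div (ne_of_gt hpos) (by positivity), Real.log_pow]
    rw [useq]
    push_cast
    field_simp
  have htend : Tendsto (fun j : ℕ =>
      (((wordsIn F ⊥ (2 * j)).card : ℝ) / (F.card : ℝ) ^ (2 * j)) ^ ((1 : ℝ)/(2 * (j : ℝ))))
      atTop (nhds (Real.exp (-(L / 2) - Real.log F.card))) := by
    refine htend1.congr' ?_
    filter_upwards [eventually_ge_atTop 1] with j hj
    exact (heq j hj).symm
  exact htend.limsup_eq

lemma specRad_pos : 0 < specRad F ⊥ := by
  rw [specRad_eq F hsym hne]; exact Real.exp_pos _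

lemma card_words_le_specRad (m : ℕ) (hm : 1 ≤ m) :
    ((wordsIn F ⊥ (m + m)).card : ℝ) ≤ (specRad F ⊥ * F.card) ^ (m + m) := by
  have hFc := F_card_pos' F hne
  have hkey : specRad F ⊥ * F.card = Real.exp (-((useq_subadd F hsym hne).lim / 2)) := by
    rw [specRad_eq F hsym hne, Real.exp_sub, Real.exp_log hFc]
    field_simp
  set L := (useq_subadd F hsym hne).lim with hL
  have hLle : L ≤ useq F m / m :=
    (useq_subadd F hsym hne).lim_le_div (useq_bddBelow F hsym hne) (by omega)
  have hcard : ((wordsIn F ⊥ (2 * m)).card : ℝ) = ((wordsIn F ⊥ (m + m)).card : ℝ) := by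
    rw [two_mul]
  have hpos : 0 < ((wordsIn F ⊥ (m + m)).card : ℝ) := card_words_even_pos F hsym hne m
  have hm' : (0:ℝ) < m := by exact_mod_cast hm
  rw [useq, hcard, le_div_iff₀ hm'] at hLle
  have hexp : Real.log ((wordsIn F ⊥ (m + m)).card : ℝ) ≤ (((m + m : ℕ)):ℝ) * (-(L / 2)) := by
    push_cast
    nlinarith
  calc ((wordsIn F ⊥ (m + m)).card : ℝ)
      = Real.exp (Real.log ((wordsIn F ⊥ (m + m)).card : ℝ)) := by
        rw [Real.exp_log hpos]
    _ ≤ Real.exp ((((m + m : ℕ)):ℝ) * (-(L / 2))) := Real.exp_le_exp.mpr hexp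
    _ = (specRad F ⊥ * F.card) ^ (m + m) := by
        rw [hkey, ← Real.exp_nat_mul]

end Fekete

-- part 5
section NormBound
variable (F : Finset G)

lemma iter_opT_zero (m : ℕ) : (opT F)^[m] (0 : G →₀ ℝ) = 0 := by
  have h : (opT F)^[m] ((0:ℝ) • (0 : G →₀ ℝ)) = (0:ℝ) • (opT F)^[m] (0 : G →₀ ℝ) :=
    iter_opT_smul F m 0 0
  simpa using h

lemma iter_opT_sum {ι : Type*} (m : ℕ) (s : Finset ι) (v : ι → (G →₀ ℝ)) :
    (opT F)^[m] (∑ i ∈ s, v i) = ∑ i ∈ s, (opT F)^[m] (v i) := by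
  classical
  induction s using Finset.induction with
  | empty => simpa using iter_opT_zero F m
  | insert _ _ hx ih =>
    rw [Finset.sum_insert hx, iter_opT_add, ih, Finset.sum_insert hx]

lemma iter_single_eq (m : ℕ) (x : G) :
    (opT F)^[m] (Finsupp.single x 1) = rsh x (wv F m) := by
  rw [show wv F m = (opT F)^[m] (Finsupp.single 1 1) from rfl, ← iter_opT_rsh,
    rsh_single, one_mul]

lemma iter_single_nonneg (m : ℕ) (x y : G) :
    0 ≤ ((opT F)^[m] (Finsupp.single x 1)) y := by
  rw [iter_single_eq, rsh_apply]
  exact wv_nonneg F m _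

variable (hsym : ∀ s ∈ F, s⁻¹ ∈ F)
include hsym

lemma diag_eq (m : ℕ) (x : G) :
    ip ((opT F)^[m] (Finsupp.single x 1)) ((opT F)^[m] (Finsupp.single x 1))
      = ((wordsIn F ⊥ (m + m)).card : ℝ) := by
  rw [iter_single_eq, ip_rsh, ip_wv F hsym]

lemma entry_le (m : ℕ) (x y : G) :
    ((opT F)^[m + m] (Finsupp.single x 1)) y ≤ ((wordsIn F ⊥ (m + m)).card : ℝ) := by
  have h1 : ((opT F)^[m + m] (Finsupp.single x 1)) y
      = ip ((opT F)^[m] (Finsupp.single x 1)) ((opT F)^[m] (Finsupp.single y 1)) := by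
    rw [← ip_single_right ((opT F)^[m + m] (Finsupp.single x 1)) y,
      Function.iterate_add_apply, ip_iter_opT F hsym]
  have hcs := ip_cauchy ((opT F)^[m] (Finsupp.single x (1:ℝ)))
    ((opT F)^[m] (Finsupp.single y (1:ℝ)))
  rw [diag_eq F hsym, diag_eq F hsym] at hcs
  have hc0 : (0:ℝ) ≤ ((wordsIn F ⊥ (m + m)).card : ℝ) := by positivity
  rw [h1]
  nlinarith [hcs, hc0]

lemma quad_le (m : ℕ) (f : G →₀ ℝ) :
    ip ((opT F)^[m + m] f) f
      ≤ ((wordsIn F ⊥ (m + m)).card : ℝ) * (∑ x ∈ f.support, |f x|) ^ 2 := by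
  have hf : (∑ x ∈ f.support, f x • Finsupp.single x (1:ℝ)) = f := by
    conv_rhs => rw [← Finsupp.sum_single f]
    rw [Finsupp.sum]
    exact Finset.sum_congr rfl fun x _ => by rw [Finsupp.smul_single, smul_eq_mul, mul_one]
  conv_lhs => rw [← hf]
  rw [iter_opT_sum, ip_sum_left]
  have hexp : ∀ x ∈ f.support,
      ip ((opT F)^[m + m] (f x • Finsupp.single x 1)) (∑ y ∈ f.support, f y • Finsupp.single y 1)
      = ∑ y ∈ f.support, f x * (f y * ((opT F)^[m + m] (Finsupp.single x 1)) y) := by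
    intro x _
    rw [iter_opT_smul, ip_smul_left, ip_sum_right, Finset.mul_sum]
    refine Finset.sum_congr rfl fun y _ => ?_
    congr 1
    rw [ip_comm, ip_smul_left, ip_comm, ip_single_right]
  rw [Finset.sum_congr rfl hexp]
  have hterm : ∀ x ∈ f.support, ∀ y ∈ f.support,
      f x * (f y * ((opT F)^[m + m] (Finsupp.single x 1)) y)
      ≤ |f x| * (|f y| * ((wordsIn F ⊥ (m + m)).card : ℝ)) := by
    intro x _ y _
    have he0 := iter_single_nonneg F (m + m) x y
    have hec := entry_le F hsym m x y
    have h1 : f x * (f y * ((opT F)^[m + m] (Finsupp.single x 1)) y)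
        ≤ |f x| * (|f y| * ((opT F)^[m + m] (Finsupp.single x 1)) y) := by
      have : f x * f y ≤ |f x| * |f y| := by
        rw [← abs_mul]; exact le_abs_self _
      nlinarith [this, he0]
    have h2 : |f x| * (|f y| * ((opT F)^[m + m] (Finsupp.single x 1)) y)
        ≤ |f x| * (|f y| * ((wordsIn F ⊥ (m + m)).card : ℝ)) :=
      mul_le_mul_of_nonneg_left
        (mul_le_mul_of_nonneg_left hec (abs_nonneg (f y))) (abs_nonneg (f x))
    linarith
  calc ∑ x ∈ f.support, ∑ y ∈ f.support,
        f x * (f y * ((opT F)^[m + m] (Finsupp.single x 1)) y)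
      ≤ ∑ x ∈ f.support, ∑ y ∈ f.support,
        |f x| * (|f y| * ((wordsIn F ⊥ (m + m)).card : ℝ)) := by
        refine Finset.sum_le_sum fun x hx => Finset.sum_le_sum fun y hy => hterm x hx y hy
    _ = ((wordsIn F ⊥ (m + m)).card : ℝ) * (∑ x ∈ f.support, |f x|) ^ 2 := by
        rw [sq, Finset.sum_mul_sum, Finset.mul_sum]
        refine Finset.sum_congr rfl fun x _ => ?_
        rw [Finset.mul_sum]
        exact Finset.sum_congr rfl fun y _ => by ring

variable (hne : F.Nonempty)
include hne

lemma opT_norm_le (f : G →₀ ℝ) :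
    ip (opT F f) (opT F f) ≤ (specRad F ⊥ * F.card) ^ 2 * ip f f := by
  set r : ℝ := specRad F ⊥ * F.card with hrdef
  have hr : 0 < r := by
    have h1 := specRad_pos F hsym hne
    have h2 : (0:ℝ) < F.card := by exact_mod_cast Finset.card_pos.mpr hne
    positivity
  by_cases hf0 : f = 0
  · subst hf0
    have h0 : opT F (0 : G →₀ ℝ) = 0 := by
      have := iter_opT_zero F 1
      simpa using this
    rw [h0]
    simp [ip]
  -- positivity of B
  have hB : 0 < ip f f := by
    obtain ⟨x, hx⟩ := Finsupp.ne_iff.mp hf0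
    simp only [Finsupp.coe_zero, Pi.zero_apply] at hx
    have hxs : x ∈ f.support := Finsupp.mem_support_iff.mpr hx
    have : 0 < f x * f x := mul_self_pos.mpr hx
    have hle : f x * f x ≤ ip f f :=
      Finset.single_le_sum (fun y _ => mul_self_nonneg (f y)) hxs
    linarith
  set B : ℝ := ip f f with hBdef
  set Lf : ℝ := ∑ x ∈ f.support, |f x| with hLdef
  have hLf : 0 ≤ Lf := Finset.sum_nonneg fun x _ => abs_nonneg _
  -- the sequence
  have hsplit : ∀ j : ℕ, ip ((opT F)^[j + j] f) f = ip ((opT F)^[j] f) ((opT F)^[j] f) := by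
    intro j
    rw [Function.iterate_add_apply, ip_iter_opT F hsym]
  have ha_nonneg : ∀ j : ℕ, 0 ≤ ip ((opT F)^[j + j] f) f := by
    intro j; rw [hsplit j]; exact ip_nonneg _
  have hpow2 : ∀ k : ℕ, 2 ^ (k + 1) = 2 ^ k + 2 ^ k := by
    intro k; rw [pow_succ]; omega
  have hrec : ∀ k : ℕ,
      ip ((opT F)^[2 ^ (k + 1)] f) f ^ 2 ≤ ip ((opT F)^[2 ^ (k + 2)] f) f * B := by
    intro k
    have hcs := ip_cauchy ((opT F)^[2 ^ (k + 1)] f) f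
    have hd : ip ((opT F)^[2 ^ (k + 1)] f) ((opT F)^[2 ^ (k + 1)] f)
        = ip ((opT F)^[2 ^ (k + 2)] f) f := by
      rw [← hsplit (2 ^ (k + 1)), ← hpow2 (k + 1)]
    rw [hd] at hcs
    exact hcs
  have ha1 : 0 ≤ ip ((opT F)^[2 ^ 1] f) f := by
    have := ha_nonneg 1
    simpa using this
  have hchain : ∀ k : ℕ,
      (ip ((opT F)^[2 ^ 1] f) f) ^ (2 ^ k)
        ≤ ip ((opT F)^[2 ^ (k + 1)] f) f * B ^ (2 ^ k - 1) := by
    intro k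
    induction k with
    | zero => simpa using le_refl _
    | succ k ih =>
      have he1 : 1 ≤ 2 ^ k := Nat.one_le_two_pow
      calc (ip ((opT F)^[2 ^ 1] f) f) ^ (2 ^ (k + 1))
          = ((ip ((opT F)^[2 ^ 1] f) f) ^ (2 ^ k)) ^ 2 := by
            have hexp : (2:ℕ) ^ (k + 1) = 2 ^ k * 2 := pow_succ 2 k
            rw [hexp, pow_mul]
        _ ≤ (ip ((opT F)^[2 ^ (k + 1)] f) f * B ^ (2 ^ k - 1)) ^ 2 :=
            pow_le_pow_left₀ (pow_nonneg ha1 _) ih 2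
        _ = (ip ((opT F)^[2 ^ (k + 1)] f) f) ^ 2 * B ^ ((2 ^ k - 1) * 2) := by
            rw [mul_pow, ← pow_mul]
        _ ≤ (ip ((opT F)^[2 ^ (k + 2)] f) f * B) * B ^ ((2 ^ k - 1) * 2) :=
            mul_le_mul_of_nonneg_right (hrec k) (pow_nonneg hB.le _)
        _ = ip ((opT F)^[2 ^ (k + 2)] f) f * B ^ ((2 ^ k - 1) * 2 + 1) := by
            rw [pow_succ]
            ring
        _ = ip ((opT F)^[2 ^ (k + 2)] f) f * B ^ (2 ^ (k + 1) - 1) := by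
            congr 2
            have := hpow2 k
            omega
  -- upper bound on a (k+1)
  have habound : ∀ k : ℕ,
      ip ((opT F)^[2 ^ (k + 1)] f) f ≤ r ^ (2 ^ (k + 1)) * Lf ^ 2 := by
    intro k
    have h1 : ip ((opT F)^[2 ^ k + 2 ^ k] f) f
        ≤ ((wordsIn F ⊥ (2 ^ k + 2 ^ k)).card : ℝ) * Lf ^ 2 := quad_le F hsym (2 ^ k) f
    have h2 : ((wordsIn F ⊥ (2 ^ k + 2 ^ k)).card : ℝ) ≤ r ^ (2 ^ k + 2 ^ k) :=
      card_words_le_specRad F hsym hne (2 ^ k) Nat.one_le_two_pow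
    have h3 : ((wordsIn F ⊥ (2 ^ k + 2 ^ k)).card : ℝ) * Lf ^ 2
        ≤ r ^ (2 ^ k + 2 ^ k) * Lf ^ 2 :=
      mul_le_mul_of_nonneg_right h2 (by positivity)
    rw [hpow2 k]
    linarith
  -- conclude
  have hgoal : ip ((opT F)^[2 ^ 1] f) f ≤ r ^ 2 * B := by
    by_contra hcon
    push_neg at hcon
    set a1 : ℝ := ip ((opT F)^[2 ^ 1] f) f with ha1def
    have hrB : 0 < r ^ 2 * B := by positivity
    set t : ℝ := a1 / (r ^ 2 * B) with htdef
    have ht : 1 < t := (one_lt_div hrB).mpr hcon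
    have hkey : ∀ k : ℕ, t ^ (2 ^ k) ≤ Lf ^ 2 / B := by
      intro k
      have h1 := hchain k
      have h2 := habound k
      have h3 : a1 ^ (2 ^ k) ≤ (r ^ (2 ^ (k + 1)) * Lf ^ 2) * B ^ (2 ^ k - 1) := by
        calc a1 ^ (2 ^ k) ≤ ip ((opT F)^[2 ^ (k + 1)] f) f * B ^ (2 ^ k - 1) := h1
          _ ≤ (r ^ (2 ^ (k + 1)) * Lf ^ 2) * B ^ (2 ^ k - 1) :=
            mul_le_mul_of_nonneg_right h2 (pow_nonneg hB.le _)
      have hBpow : B ^ (2 ^ k - 1) * B = B ^ (2 ^ k) := by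
        rw [← pow_succ]
        congr 1
        have : 1 ≤ 2 ^ k := Nat.one_le_two_pow
        omega
      have hrpow : r ^ (2 ^ (k + 1)) = (r ^ 2) ^ (2 ^ k) := by
        rw [← pow_mul]
        congr 1
        rw [pow_succ]
        ring
      have h4 : a1 ^ (2 ^ k) * B ≤ (r ^ 2 * B) ^ (2 ^ k) * Lf ^ 2 := by
        calc a1 ^ (2 ^ k) * B ≤ ((r ^ (2 ^ (k + 1)) * Lf ^ 2) * B ^ (2 ^ k - 1)) * B :=
              mul_le_mul_of_nonneg_right h3 hB.le
          _ = (r ^ (2 ^ (k + 1))) * B ^ (2 ^ k) * Lf ^ 2 := by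
              rw [mul_assoc, hBpow]; ring
          _ = (r ^ 2 * B) ^ (2 ^ k) * Lf ^ 2 := by
              rw [hrpow, ← mul_pow]
      rw [htdef, div_pow, div_le_div_iff₀ (by positivity) hB]
      calc a1 ^ 2 ^ k * B ≤ (r ^ 2 * B) ^ (2 ^ k) * Lf ^ 2 := h4
        _ = Lf ^ 2 * (r ^ 2 * B) ^ 2 ^ k := by ring
    -- contradiction: t^k → ∞
    obtain ⟨k, hk⟩ := ((tendsto_pow_atTop_atTop_of_one_lt ht).eventually
      (eventually_gt_atTop (Lf ^ 2 / B))).exists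
    have hmono : t ^ k ≤ t ^ (2 ^ k) :=
      pow_le_pow_right₀ ht.le (Nat.le_of_lt (Nat.lt_two_pow_self (n := k)))
    have := hkey k
    linarith
  -- rewrite goal
  have hfin : ip (opT F f) (opT F f) = ip ((opT F)^[2 ^ 1] f) f := by
    have h1 : ip ((opT F)^[1 + 1] f) f = ip ((opT F)^[1] f) ((opT F)^[1] f) := hsplit 1
    simpa using h1.symm
  rw [hfin]
  exact hgoal

end NormBound

-- conjugation lemmas
lemma mem_conjSubgroup (H : Subgroup G) (g x : G) :
    x ∈ conjSubgroup g H ↔ g * x * g⁻¹ ∈ H := by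
  unfold conjSubgroup
  rw [Subgroup.mem_map]
  constructor
  · rintro ⟨h, hh, rfl⟩
    simpa [MulAut.conj_apply, mul_assoc] using hh
  · intro hx
    refine ⟨g * x * g⁻¹, hx, ?_⟩
    simp [MulAut.conj_apply, mul_assoc]

lemma conj_mem_iff (H : Subgroup G) {h : G} (hh : h ∈ H) (y : G) :
    h * y * h⁻¹ ∈ H ↔ y ∈ H := by
  constructor
  · intro hy
    have h2 := H.mul_mem (H.mul_mem (H.inv_mem hh) hy) hh
    have e : h⁻¹ * (h * y * h⁻¹) * h = y := by group
    rwa [e] at h2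
  · intro hy
    exact H.mul_mem (H.mul_mem hh hy) (H.inv_mem hh)

lemma conjSubgroup_mul (H : Subgroup G) {h : G} (g : G) (hh : h ∈ H) :
    conjSubgroup (h * g) H = conjSubgroup g H := by
  ext x
  rw [mem_conjSubgroup, mem_conjSubgroup]
  have e : h * g * x * (h * g)⁻¹ = h * (g * x * g⁻¹) * h⁻¹ := by group
  rw [e, conj_mem_iff H hh]

lemma conjSubgroup_eq_of_coset (H : Subgroup G) {a b : G} (hab : b * a⁻¹ ∈ H) :
    conjSubgroup b H = conjSubgroup a H := by
  have e : b = (b * a⁻¹) * a := by group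
  rw [e, conjSubgroup_mul H a hab]

-- prefixProd lemmas
lemma prefixProd_zero {n : ℕ} (w : Fin n → G) : prefixProd w 0 = 1 := rfl

lemma prefixProd_succ {n : ℕ} (w : Fin n → G) (i : ℕ) (h : i < n) :
    prefixProd w (i + 1) = prefixProd w i * w ⟨i, h⟩ := by
  unfold prefixProd
  have hlen : i < (List.ofFn w).length := by simpa using h
  rw [List.prod_take_succ _ i hlen]
  congr 1
  simp

lemma prefixProd_stable {n : ℕ} (w : Fin n → G) (m : ℕ) (h : n ≤ m) :
    prefixProd w m = prefixProd w n := by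
  unfold prefixProd
  rw [List.take_of_length_le (by simpa using h), List.take_of_length_le (by simp)]

lemma prefixProd_top {n : ℕ} (w : Fin n → G) : (List.ofFn w).prod = prefixProd w n := by
  unfold prefixProd
  rw [List.take_of_length_le (by simp)]

-- skeleton
def skel (H : Subgroup G) (n : ℕ) (w : Fin n → G) : Fin n → Option G :=
  fun i => if prefixProd w ((i : ℕ) + 1) * (prefixProd w (i : ℕ))⁻¹ ∈ H then none
    else some (w i)

lemma skel_none_iff (H : Subgroup G) {n : ℕ} (w : Fin n → G) (i : Fin n) :
    skel H n w i = none
      ↔ prefixProd w ((i : ℕ) + 1) * (prefixProd w (i : ℕ))⁻¹ ∈ H := by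
  unfold skel
  by_cases hc : prefixProd w ((i : ℕ) + 1) * (prefixProd w (i : ℕ))⁻¹ ∈ H
  · simp [hc]
  · simp [hc]

lemma skel_eq_some (H : Subgroup G) {n : ℕ} (w : Fin n → G) (i : Fin n)
    (h : skel H n w i ≠ none) : skel H n w i = some (w i) := by
  unfold skel at h ⊢
  by_cases hc : prefixProd w ((i : ℕ) + 1) * (prefixProd w (i : ℕ))⁻¹ ∈ H
  · exact absurd (if_pos hc) h
  · rw [if_neg hc]

/-- words with equal skeletons follow the same coset path -/
lemma coset_of_skel_eq (H : Subgroup G) {n : ℕ} {w w' : Fin n → G}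
    (hsk : skel H n w = skel H n w') :
    ∀ m, prefixProd w' m * (prefixProd w m)⁻¹ ∈ H := by
  intro m
  induction m with
  | zero => simpa [prefixProd_zero] using H.one_mem
  | succ m ih =>
    by_cases hm : m < n
    · set i : Fin n := ⟨m, hm⟩ with hidef
      have hmi : (i : ℕ) = m := rfl
      have hski : skel H n w i = skel H n w' i := congrFun hsk i
      by_cases hc : prefixProd w (m + 1) * (prefixProd w m)⁻¹ ∈ H
      · have hnone : skel H n w i = none := (skel_none_iff H w i).mpr (by rwa [hmi])
        have hnone' : skel H n w' i = none := by rw [← hski]; exact hnone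
        have hc' : prefixProd w' (m + 1) * (prefixProd w' m)⁻¹ ∈ H := by
          have := (skel_none_iff H w' i).mp hnone'
          rwa [hmi] at this
        have e : prefixProd w' (m + 1) * (prefixProd w (m + 1))⁻¹
            = (prefixProd w' (m + 1) * (prefixProd w' m)⁻¹)
              * ((prefixProd w' m * (prefixProd w m)⁻¹)
              * (prefixProd w (m + 1) * (prefixProd w m)⁻¹)⁻¹) := by group
        rw [e]
        exact H.mul_mem hc' (H.mul_mem ih (H.inv_mem hc))
      · have hsome : skel H n w i ≠ none := by
          rw [Ne, skel_none_iff H w i, hmi]; exact hc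
        have h1 : skel H n w i = some (w i) := skel_eq_some H w i hsome
        have hsome' : skel H n w' i ≠ none := by rw [← hski]; exact hsome
        have h2 : skel H n w' i = some (w' i) := skel_eq_some H w' i hsome'
        have hww : w i = w' i := by
          have := h1.symm.trans (hski.trans h2)
          exact Option.some.inj this
        have e1 : prefixProd w (m + 1) = prefixProd w m * w i := prefixProd_succ w m hm
        have e2 : prefixProd w' (m + 1) = prefixProd w' m * w' i := prefixProd_succ w' m hm
        have e : prefixProd w' (m + 1) * (prefixProd w (m + 1))⁻¹
            = prefixProd w' m * (prefixProd w m)⁻¹ := by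
          rw [e1, e2, hww]; group
        rw [e]
        exact ih
    · push_neg at hm
      have e1 : prefixProd w (m + 1) = prefixProd w m := by
        rw [prefixProd_stable w (m + 1) (by omega), prefixProd_stable w m hm]
      have e2 : prefixProd w' (m + 1) = prefixProd w' m := by
        rw [prefixProd_stable w' (m + 1) (by omega), prefixProd_stable w' m hm]
      rw [e1, e2]
      exact ih

lemma conjSubgroup_prefix_eq (H : Subgroup G) {n : ℕ} {w w' : Fin n → G}
    (hsk : skel H n w = skel H n w') (m : ℕ) :
    conjSubgroup (prefixProd w' m) H = conjSubgroup (prefixProd w m) H :=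
  conjSubgroup_eq_of_coset H (coset_of_skel_eq H hsk m)

-- part 7 : the alphabet family of a skeleton
def famA (S : Finset G) (H : Subgroup G) (n : ℕ) (w₀ : Fin n → G) : Fin n → Finset G :=
  fun i => if skel H n w₀ i = none
    then S.filter (fun a => a ∈ conjSubgroup (prefixProd w₀ (i : ℕ)) H)
    else {w₀ i}

variable (S : Finset G) (H : Subgroup G) {n : ℕ}

lemma famA_subset (w₀ : Fin n → G) (hw₀ : ∀ i, w₀ i ∈ S) (i : Fin n) :
    famA S H n w₀ i ⊆ S := by
  unfold famA
  by_cases hc : skel H n w₀ i = none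
  · rw [if_pos hc]; exact Finset.filter_subset _ _
  · rw [if_neg hc]
    intro a ha
    rw [Finset.mem_singleton] at ha
    rw [ha]; exact hw₀ i

lemma famA_self_mem (w₀ : Fin n → G) (hw₀ : ∀ i, w₀ i ∈ S) (i : Fin n) :
    w₀ i ∈ famA S H n w₀ i := by
  unfold famA
  by_cases hc : skel H n w₀ i = none
  · rw [if_pos hc]
    refine Finset.mem_filter.mpr ⟨hw₀ i, ?_⟩
    rw [mem_conjSubgroup]
    have hcond := (skel_none_iff H w₀ i).mp hc
    have e : prefixProd w₀ ((i : ℕ)) * w₀ i * (prefixProd w₀ (i : ℕ))⁻¹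
        = prefixProd w₀ ((i : ℕ) + 1) * (prefixProd w₀ (i : ℕ))⁻¹ := by
      rw [prefixProd_succ w₀ (i : ℕ) i.isLt]
    rw [e]
    exact hcond
  · rw [if_neg hc]; exact Finset.mem_singleton_self _

lemma famA_symm (hsymm : ∀ s ∈ S, s⁻¹ ∈ S) (w₀ : Fin n → G) (i : Fin n) :
    ∀ a ∈ famA S H n w₀ i, skel H n w₀ i = none → a⁻¹ ∈ famA S H n w₀ i := by
  intro a ha hc
  unfold famA at ha ⊢
  rw [if_pos hc] at ha ⊢
  obtain ⟨haS, haH⟩ := Finset.mem_filter.mp ha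
  exact Finset.mem_filter.mpr ⟨hsymm a haS, (conjSubgroup _ H).inv_mem haH⟩

/-- membership in the product family implies same coset path -/
lemma coset_of_famA {w₀ w' : Fin n → G} (hw' : ∀ i, w' i ∈ famA S H n w₀ i) :
    ∀ m, prefixProd w' m * (prefixProd w₀ m)⁻¹ ∈ H := by
  intro m
  induction m with
  | zero => simpa [prefixProd_zero] using H.one_mem
  | succ m ih =>
    by_cases hm : m < n
    · set i : Fin n := ⟨m, hm⟩ with hidef
      have hmi : (i : ℕ) = m := rfl
      have e1 : prefixProd w₀ (m + 1) = prefixProd w₀ m * w₀ i := prefixProd_succ w₀ m hm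
      have e2 : prefixProd w' (m + 1) = prefixProd w' m * w' i := prefixProd_succ w' m hm
      have hwi := hw' i
      unfold famA at hwi
      by_cases hc : skel H n w₀ i = none
      · rw [if_pos hc] at hwi
        obtain ⟨hS, hK⟩ := Finset.mem_filter.mp hwi
        rw [mem_conjSubgroup] at hK
        rw [hmi] at hK
        have hcond : prefixProd w₀ m * w₀ i * (prefixProd w₀ m)⁻¹ ∈ H := by
          have := (skel_none_iff H w₀ i).mp hc
          rw [hmi] at this
          rwa [e1] at this
        have e : prefixProd w' (m + 1) * (prefixProd w₀ (m + 1))⁻¹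
            = (prefixProd w' m * (prefixProd w₀ m)⁻¹)
              * ((prefixProd w₀ m * w' i * (prefixProd w₀ m)⁻¹)
              * (prefixProd w₀ m * w₀ i * (prefixProd w₀ m)⁻¹)⁻¹) := by
          rw [e1, e2]; group
        rw [e]
        exact H.mul_mem ih (H.mul_mem hK (H.inv_mem hcond))
      · rw [if_neg hc, Finset.mem_singleton] at hwi
        have e : prefixProd w' (m + 1) * (prefixProd w₀ (m + 1))⁻¹
            = prefixProd w' m * (prefixProd w₀ m)⁻¹ := by
          rw [e1, e2, hwi]; group
        rw [e]
        exact ih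
    · push_neg at hm
      have e1 : prefixProd w₀ (m + 1) = prefixProd w₀ m := by
        unfold prefixProd
        rw [List.take_of_length_le (by simp; omega), List.take_of_length_le (by simp; omega)]
      have e2 : prefixProd w' (m + 1) = prefixProd w' m := by
        unfold prefixProd
        rw [List.take_of_length_le (by simp; omega), List.take_of_length_le (by simp; omega)]
      rw [e1, e2]
      exact ih

/-- membership in the product family implies same skeleton -/
lemma skel_of_famA {w₀ w' : Fin n → G} (hw' : ∀ i, w' i ∈ famA S H n w₀ i) :
    skel H n w' = skel H n w₀ := by
  have hcos := coset_of_famA S H hw'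
  funext i
  have hm : (i : ℕ) < n := i.isLt
  have e1 : prefixProd w₀ ((i : ℕ) + 1) = prefixProd w₀ (i : ℕ) * w₀ i := by
    have := prefixProd_succ w₀ (i : ℕ) hm
    simpa using this
  have e2 : prefixProd w' ((i : ℕ) + 1) = prefixProd w' (i : ℕ) * w' i := by
    have := prefixProd_succ w' (i : ℕ) hm
    simpa using this
  have hwi := hw' i
  unfold famA at hwi
  by_cases hc : skel H n w₀ i = none
  · -- then also skel w' i = none
    have hcond₀ := (skel_none_iff H w₀ i).mp hc
    have hcond' : prefixProd w' ((i : ℕ) + 1) * (prefixProd w' (i : ℕ))⁻¹ ∈ H := by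
      have e : prefixProd w' ((i : ℕ) + 1) * (prefixProd w' (i : ℕ))⁻¹
          = (prefixProd w' ((i : ℕ) + 1) * (prefixProd w₀ ((i : ℕ) + 1))⁻¹)
            * ((prefixProd w₀ ((i : ℕ) + 1) * (prefixProd w₀ (i : ℕ))⁻¹)
            * (prefixProd w' (i : ℕ) * (prefixProd w₀ (i : ℕ))⁻¹)⁻¹) := by group
      rw [e]
      exact H.mul_mem (hcos ((i : ℕ) + 1)) (H.mul_mem hcond₀ (H.inv_mem (hcos (i : ℕ))))
    rw [hc, (skel_none_iff H w' i).mpr hcond']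
  · -- some case
    rw [if_neg hc, Finset.mem_singleton] at hwi
    have hcond₀ : prefixProd w₀ ((i : ℕ) + 1) * (prefixProd w₀ (i : ℕ))⁻¹ ∉ H := by
      intro habs
      exact hc ((skel_none_iff H w₀ i).mpr habs)
    have hcond' : prefixProd w' ((i : ℕ) + 1) * (prefixProd w' (i : ℕ))⁻¹ ∉ H := by
      intro habs
      apply hcond₀
      have e : prefixProd w₀ ((i : ℕ) + 1) * (prefixProd w₀ (i : ℕ))⁻¹
          = (prefixProd w' ((i : ℕ) + 1) * (prefixProd w₀ ((i : ℕ) + 1))⁻¹)⁻¹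
            * ((prefixProd w' ((i : ℕ) + 1) * (prefixProd w' (i : ℕ))⁻¹)
            * (prefixProd w' (i : ℕ) * (prefixProd w₀ (i : ℕ))⁻¹)) := by group
      rw [e]
      exact H.mul_mem (H.inv_mem (hcos ((i : ℕ) + 1))) (H.mul_mem habs (hcos (i : ℕ)))
    have h1 : skel H n w' i = some (w' i) := by
      unfold skel
      rw [if_neg hcond']
    have h2 : skel H n w₀ i = some (w₀ i) := by
      unfold skel
      rw [if_neg hcond₀]
    rw [h1, h2, hwi]

/-- same skeleton and letters in S implies membership in the product family -/
lemma famA_of_skel {w₀ w' : Fin n → G} (hS : ∀ i, w' i ∈ S)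
    (hsk : skel H n w' = skel H n w₀) : ∀ i, w' i ∈ famA S H n w₀ i := by
  have hcos := coset_of_skel_eq H hsk.symm
  intro i
  have hm : (i : ℕ) < n := i.isLt
  have e2 : prefixProd w' ((i : ℕ) + 1) = prefixProd w' (i : ℕ) * w' i := by
    have := prefixProd_succ w' (i : ℕ) hm
    simpa using this
  unfold famA
  by_cases hc : skel H n w₀ i = none
  · rw [if_pos hc]
    refine Finset.mem_filter.mpr ⟨hS i, ?_⟩
    have hc' : skel H n w' i = none := by rw [hsk]; exact hc
    have hcond' := (skel_none_iff H w' i).mp hc'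
    rw [mem_conjSubgroup]
    have e : prefixProd w₀ (i : ℕ) * w' i * (prefixProd w₀ (i : ℕ))⁻¹
        = (prefixProd w' (i : ℕ) * (prefixProd w₀ (i : ℕ))⁻¹)⁻¹
          * ((prefixProd w' ((i : ℕ) + 1) * (prefixProd w' (i : ℕ))⁻¹)
          * (prefixProd w' (i : ℕ) * (prefixProd w₀ (i : ℕ))⁻¹)) := by
      rw [e2]; group
    rw [e]
    exact H.mul_mem (H.inv_mem (hcos (i : ℕ))) (H.mul_mem hcond' (hcos (i : ℕ)))
  · rw [if_neg hc, Finset.mem_singleton]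
    have hc' : skel H n w' i ≠ none := by rw [hsk]; exact hc
    have h1 : skel H n w' i = some (w' i) := skel_eq_some H w' i hc'
    have h2 : skel H n w₀ i = some (w₀ i) := skel_eq_some H w₀ i hc
    have := h1.symm.trans ((congrFun hsk i).trans h2)
    exact Option.some.inj this

/-- the H-fiber of the skeleton is exactly the product set of the family -/
lemma fiber_eq_piFinset (w₀ : Fin n → G) (hw₀ : ∀ i, w₀ i ∈ S) :
    (Fintype.piFinset fun _ : Fin n => S).filter
        (fun w' => skel H n w' = skel H n w₀)
      = Fintype.piFinset (famA S H n w₀) := by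
  ext w'
  rw [Finset.mem_filter, Fintype.mem_piFinset, Fintype.mem_piFinset]
  constructor
  · rintro ⟨h1, h2⟩
    exact famA_of_skel S H h1 h2
  · intro h
    exact ⟨fun i => famA_subset S H w₀ hw₀ i (h i), skel_of_famA S H h⟩

-- part 6 : norm bound for mixed products
lemma ip_single_self (g : G) : ip (Finsupp.single g (1:ℝ)) (Finsupp.single g 1) = 1 := by
  rw [ip_single_right, Finsupp.single_apply, if_pos rfl]

lemma mix_norm_le (n : ℕ) (A : Fin n → Finset G) (fac : Fin n → ℝ)
    (hfac : ∀ i, 0 ≤ fac i)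
    (hb : ∀ (i : Fin n) (f : G →₀ ℝ), ip (opT (A i) f) (opT (A i) f) ≤ fac i ^ 2 * ip f f) :
    ip (mixvec n A) (mixvec n A) ≤ (∏ i, fac i) ^ 2 := by
  induction n with
  | zero =>
    have h0 : mixvec 0 A = Finsupp.single 1 1 := rfl
    rw [h0, ip_single_self]
    simp
  | succ n ih =>
    have hmix : mixvec (n + 1) A = opT (A 0) (mixvec n fun i => A i.succ) := rfl
    have h2 := ih (fun i => A i.succ) (fun i => fac i.succ) (fun i => hfac i.succ)
      (fun i f => hb i.succ f)
    calc ip (mixvec (n + 1) A) (mixvec (n + 1) A)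
        ≤ fac 0 ^ 2 * ip (mixvec n fun i => A i.succ) (mixvec n fun i => A i.succ) := by
          rw [hmix]; exact hb 0 _
      _ ≤ fac 0 ^ 2 * (∏ i : Fin n, fac i.succ) ^ 2 :=
          mul_le_mul_of_nonneg_left h2 (by positivity)
      _ = (∏ i : Fin (n + 1), fac i) ^ 2 := by
          rw [Fin.prod_univ_succ]; ring

lemma mix_entry_le (n : ℕ) (A : Fin n → Finset G) (fac : Fin n → ℝ)
    (hfac : ∀ i, 0 ≤ fac i)
    (hb : ∀ (i : Fin n) (f : G →₀ ℝ), ip (opT (A i) f) (opT (A i) f) ≤ fac i ^ 2 * ip f f)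
    (g : G) : mixvec n A g ≤ ∏ i, fac i := by
  have hcs := ip_cauchy (mixvec n A) (Finsupp.single g 1)
  rw [ip_single_right, ip_single_self, mul_one] at hcs
  have h1 := mix_norm_le n A fac hfac hb
  have hnn := mixvec_nonneg n A g
  have hp : 0 ≤ ∏ i, fac i := Finset.prod_nonneg fun i _ => hfac i
  nlinarith

-- part 8 : T-sets
def Tst (H : Subgroup G) {n : ℕ} (w : Fin n → G) : Finset ℕ :=
  (Finset.Icc 1 n).filter
    (fun t => (prefixProd w (t - 1))⁻¹ * prefixProd w t ∈
      conjSubgroup (prefixProd w (t - 1)) H)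

def rhoT (S : Finset G) (H : Subgroup G) {n : ℕ} (w : Fin n → G) (t : ℕ) : ℝ :=
  specRad (S.filter fun a => a ∈ conjSubgroup (prefixProd w t) H) ⊥

lemma Tst_cond_iff (H : Subgroup G) {n : ℕ} (w : Fin n → G) {t : ℕ}
    (h1 : 1 ≤ t) (h2 : t ≤ n) :
    ((prefixProd w (t - 1))⁻¹ * prefixProd w t ∈ conjSubgroup (prefixProd w (t - 1)) H)
      ↔ skel H n w ⟨t - 1, by omega⟩ = none := by
  rw [skel_none_iff, mem_conjSubgroup]
  have ht : t - 1 + 1 = t := by omega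
  have hco : ((⟨t - 1, by omega⟩ : Fin n) : ℕ) = t - 1 := rfl
  rw [hco, ht]
  have e : prefixProd w (t - 1) * ((prefixProd w (t - 1))⁻¹ * prefixProd w t)
      * (prefixProd w (t - 1))⁻¹ = prefixProd w t * (prefixProd w (t - 1))⁻¹ := by group
  rw [e]

lemma mem_Tst (H : Subgroup G) {n : ℕ} (w : Fin n → G) (i : Fin n) :
    ((i : ℕ) + 1) ∈ Tst H w ↔ skel H n w i = none := by
  unfold Tst
  rw [Finset.mem_filter, Finset.mem_Icc]
  have h1 : 1 ≤ (i : ℕ) + 1 := by omega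
  have h2 : (i : ℕ) + 1 ≤ n := i.isLt
  rw [Tst_cond_iff H w h1 h2]
  have : (⟨(i : ℕ) + 1 - 1, by omega⟩ : Fin n) = i := by
    ext; simp
  rw [this]
  tauto

lemma Tst_prod {M : Type*} [CommMonoid M] (H : Subgroup G) {n : ℕ} (w : Fin n → G)
    (φ : ℕ → M) :
    ∏ t ∈ Tst H w, φ t
      = ∏ i ∈ Finset.univ.filter (fun i : Fin n => skel H n w i = none), φ ((i : ℕ) + 1) := by
  have hlt : ∀ t ∈ Tst H w, t - 1 < n := by
    intro t ht
    have := Finset.mem_Icc.mp (Finset.mem_filter.mp ht).1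
    omega
  refine Finset.prod_bij' (fun t ht => (⟨t - 1, hlt t ht⟩ : Fin n))
    (fun i _ => (i : ℕ) + 1) ?_ ?_ ?_ ?_ ?_
  · intro t ht
    have hIcc := Finset.mem_Icc.mp (Finset.mem_filter.mp ht).1
    refine Finset.mem_filter.mpr ⟨Finset.mem_univ _, ?_⟩
    rw [← mem_Tst]
    have : ((⟨t - 1, hlt t ht⟩ : Fin n) : ℕ) + 1 = t := by
      have : ((⟨t - 1, hlt t ht⟩ : Fin n) : ℕ) = t - 1 := rfl
      omega
    rwa [this]
  · intro i hi
    rw [mem_Tst]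
    exact (Finset.mem_filter.mp hi).2
  · intro t ht
    have hIcc := Finset.mem_Icc.mp (Finset.mem_filter.mp ht).1
    show (t - 1) + 1 = t
    omega
  · intro i _
    ext
    show (i : ℕ) + 1 - 1 = (i : ℕ)
    omega
  · intro t ht
    have hIcc := Finset.mem_Icc.mp (Finset.mem_filter.mp ht).1
    have : ((⟨t - 1, hlt t ht⟩ : Fin n) : ℕ) + 1 = t := by
      have : ((⟨t - 1, hlt t ht⟩ : Fin n) : ℕ) = t - 1 := rfl
      omega
    rw [this]

-- part 9
variable (S : Finset G) (H : Subgroup G) {n : ℕ}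

def EE (w : Fin n → G) : ℝ := ∑ t ∈ Tst H w, (-Real.log (rhoT S H w t))
def RRp (w : Fin n → G) : ℝ := ∏ t ∈ Tst H w, rhoT S H w t

lemma rho_eq_famA (w₀ : Fin n → G) (i : Fin n) (hc : skel H n w₀ i = none) :
    (S.filter fun a => a ∈ conjSubgroup (prefixProd w₀ ((i : ℕ) + 1)) H)
      = famA S H n w₀ i := by
  unfold famA
  rw [if_pos hc, conjSubgroup_eq_of_coset H ((skel_none_iff H w₀ i).mp hc)]

lemma famA_nonempty (w₀ : Fin n → G) (hw₀ : ∀ i, w₀ i ∈ S) (i : Fin n) :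
    (famA S H n w₀ i).Nonempty := ⟨w₀ i, famA_self_mem S H w₀ hw₀ i⟩

lemma rhoT_pos (hsymm : ∀ s ∈ S, s⁻¹ ∈ S) (w₀ : Fin n → G) (hw₀ : ∀ i, w₀ i ∈ S)
    {t : ℕ} (ht : t ∈ Tst H w₀) : 0 < rhoT S H w₀ t := by
  have hIcc := Finset.mem_Icc.mp (Finset.mem_filter.mp ht).1
  have hlt : t - 1 < n := by omega
  set i : Fin n := ⟨t - 1, hlt⟩ with hidef
  have hti : (i : ℕ) + 1 = t := by
    have : (i : ℕ) = t - 1 := rfl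
    omega
  have hc : skel H n w₀ i = none := (mem_Tst H w₀ i).mp (by rwa [hti])
  rw [rhoT, ← hti, rho_eq_famA S H w₀ i hc]
  exact specRad_pos _ (fun a ha => famA_symm S H hsymm w₀ i a ha hc)
    (famA_nonempty S H w₀ hw₀ i)

lemma Tst_eq_of_skel {w w' : Fin n → G} (hsk : skel H n w = skel H n w') :
    Tst H w = Tst H w' := by
  unfold Tst
  refine Finset.filter_congr fun t ht => ?_
  have hIcc := Finset.mem_Icc.mp ht
  rw [Tst_cond_iff H w hIcc.1 hIcc.2, Tst_cond_iff H w' hIcc.1 hIcc.2, hsk]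

lemma rhoT_eq_of_skel {w w' : Fin n → G} (hsk : skel H n w = skel H n w') (t : ℕ) :
    rhoT S H w t = rhoT S H w' t := by
  unfold rhoT
  rw [(conjSubgroup_prefix_eq H hsk t).symm]

lemma EE_eq_of_skel {w w' : Fin n → G} (hsk : skel H n w = skel H n w') :
    EE S H w = EE S H w' := by
  unfold EE
  rw [Tst_eq_of_skel H hsk]
  exact Finset.sum_congr rfl fun t _ => by rw [rhoT_eq_of_skel S H hsk t]

lemma RRp_eq_of_skel {w w' : Fin n → G} (hsk : skel H n w = skel H n w') :
    RRp S H w = RRp S H w' := by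
  unfold RRp
  rw [Tst_eq_of_skel H hsk]
  exact Finset.prod_congr rfl fun t _ => by rw [rhoT_eq_of_skel S H hsk t]

lemma RRp_pos (hsymm : ∀ s ∈ S, s⁻¹ ∈ S) (w₀ : Fin n → G) (hw₀ : ∀ i, w₀ i ∈ S) :
    0 < RRp S H w₀ :=
  Finset.prod_pos fun t ht => rhoT_pos S H hsymm w₀ hw₀ ht

lemma EE_eq_neg_log (hsymm : ∀ s ∈ S, s⁻¹ ∈ S) (w₀ : Fin n → G) (hw₀ : ∀ i, w₀ i ∈ S) :
    EE S H w₀ = -Real.log (RRp S H w₀) := by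
  unfold EE RRp
  rw [Real.log_prod (fun t ht => ne_of_gt (rhoT_pos S H hsymm w₀ hw₀ ht)),
    ← Finset.sum_neg_distrib]

lemma fiber_card_le (hsymm : ∀ s ∈ S, s⁻¹ ∈ S) (w₀ : Fin n → G) (hw₀ : ∀ i, w₀ i ∈ S) :
    ((((Fintype.piFinset (famA S H n w₀)).filter
        (fun w => (List.ofFn w).prod = 1)).card : ℝ))
      ≤ RRp S H w₀ * ∏ i, ((famA S H n w₀ i).card : ℝ) := by
  set fac : Fin n → ℝ := fun i =>
    (if skel H n w₀ i = none then specRad (famA S H n w₀ i) ⊥ else 1)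
      * ((famA S H n w₀ i).card : ℝ) with hfacdef
  have hspos : ∀ i : Fin n, skel H n w₀ i = none → 0 < specRad (famA S H n w₀ i) ⊥ :=
    fun i hc => specRad_pos _ (fun a ha => famA_symm S H hsymm w₀ i a ha hc)
      (famA_nonempty S H w₀ hw₀ i)
  have hfac0 : ∀ i, 0 ≤ fac i := by
    intro i
    rw [hfacdef]
    dsimp only
    by_cases hc : skel H n w₀ i = none
    · rw [if_pos hc]
      have := hspos i hc
      positivity
    · rw [if_neg hc]
      simp
  have hbb : ∀ (i : Fin n) (f : G →₀ ℝ),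
      ip (opT (famA S H n w₀ i) f) (opT (famA S H n w₀ i) f) ≤ fac i ^ 2 * ip f f := by
    intro i f
    by_cases hc : skel H n w₀ i = none
    · have h1 := opT_norm_le (famA S H n w₀ i)
        (fun a ha => famA_symm S H hsymm w₀ i a ha hc) (famA_nonempty S H w₀ hw₀ i) f
      have : fac i = specRad (famA S H n w₀ i) ⊥ * ((famA S H n w₀ i).card : ℝ) := by
        rw [hfacdef]; dsimp only; rw [if_pos hc]
      rw [this]
      exact h1
    · have hsing : famA S H n w₀ i = {w₀ i} := by unfold famA; rw [if_neg hc]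
      have hop : opT (famA S H n w₀ i) f = lsh (w₀ i) f := by
        rw [hsing, opT, Finset.sum_singleton]
      rw [hop, ip_lsh]
      have : fac i = 1 := by
        rw [hfacdef]; dsimp only; rw [if_neg hc, hsing]
        simp
      rw [this, one_pow, one_mul]
  have hcount := mix_entry_le n (famA S H n w₀) fac hfac0 hbb 1
  rw [mixvec_apply] at hcount
  have hprod : ∏ i, fac i
      = RRp S H w₀ * ∏ i, ((famA S H n w₀ i).card : ℝ) := by
    rw [hfacdef, Finset.prod_mul_distrib]
    congr 1
    have h1 : RRp S H w₀
        = ∏ i ∈ Finset.univ.filter (fun i : Fin n => skel H n w₀ i = none),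
            rhoT S H w₀ ((i : ℕ) + 1) := Tst_prod H w₀ _
    have h2 : ∀ i ∈ Finset.univ.filter (fun i : Fin n => skel H n w₀ i = none),
        rhoT S H w₀ ((i : ℕ) + 1) = specRad (famA S H n w₀ i) ⊥ := by
      intro i hi
      have hc := (Finset.mem_filter.mp hi).2
      rw [rhoT, rho_eq_famA S H w₀ i hc]
    rw [h1, Finset.prod_congr rfl h2, Finset.prod_filter]
  rw [← hprod]
  exact hcount

end SRP

set_option maxHeartbeats 1000000 in
/-- **Key estimate in the proof of the spectral radius inequality.** For `n ≥ 1` with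
`A(n,S) ≠ ∅` and `T(w) = {t ∈ {1,…,n} : a_t ∈ H^{w(t−1)}}` (the times at which the walk
does not change `H`-coset),
`log|A_H(n,S)| − log|A(n,S)| ≥ (1/|A(n,S)|) Σ_{w∈A(n,S)} Σ_{t∈T(w)} (−log ρ(H^{w(t)}, H^{w(t)} ∩ S))`. -/
theorem log_card_walks_estimate [Countable G]
    (S : Finset G) (hgen : Subgroup.closure (S : Set G) = ⊤)
    (hsymm : ∀ s ∈ S, s⁻¹ ∈ S) (H : Subgroup G)
    (n : ℕ) (hn : 1 ≤ n) (hne : (wordsIn S ⊥ n).Nonempty) :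
    Real.log ((wordsIn S H n).card : ℝ) - Real.log ((wordsIn S ⊥ n).card : ℝ) ≥
      (1 / ((wordsIn S ⊥ n).card : ℝ)) *
        ∑ w ∈ wordsIn S ⊥ n,
          ∑ t ∈ (Finset.Icc 1 n).filter
              (fun t => (prefixProd w (t - 1))⁻¹ * prefixProd w t ∈
                conjSubgroup (prefixProd w (t - 1)) H),
            (-Real.log (specRad (S.filter fun a => a ∈ conjSubgroup (prefixProd w t) H) ⊥)) := by
  classical
  have hEEdef : ∀ w : Fin n → G,
      (∑ t ∈ (Finset.Icc 1 n).filter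
          (fun t => (prefixProd w (t - 1))⁻¹ * prefixProd w t ∈
            conjSubgroup (prefixProd w (t - 1)) H),
        (-Real.log (specRad (S.filter fun a => a ∈ conjSubgroup (prefixProd w t) H) ⊥)))
      = SRP.EE S H w := fun w => rfl
  rw [Finset.sum_congr rfl fun w _ => hEEdef w]
  set Ω := wordsIn S ⊥ n with hΩdef
  set W := Fintype.piFinset (fun _ : Fin n => S) with hWdef
  have hΩsub : Ω ⊆ W := Finset.filter_subset _ _
  have hWmem : ∀ w ∈ W, ∀ i, w i ∈ S := fun w hw => Fintype.mem_piFinset.mp hw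
  have hΩprod : ∀ w ∈ Ω, (List.ofFn w).prod = 1 := fun w hw =>
    Subgroup.mem_bot.mp (Finset.mem_filter.mp hw).2
  set I := Ω.image (SRP.skel H n) with hIdef
  have hrepex : ∀ σ ∈ I, ∃ w, w ∈ Ω ∧ SRP.skel H n w = σ := by
    intro σ hσ
    obtain ⟨w, hw, hws⟩ := Finset.mem_image.mp hσ
    exact ⟨w, hw, hws⟩
  set rep : (Fin n → Option G) → (Fin n → G) := fun σ =>
    if h : ∃ w, w ∈ Ω ∧ SRP.skel H n w = σ then h.choose else fun _ => 1 with hrepdef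
  have hrep : ∀ σ ∈ I, rep σ ∈ Ω ∧ SRP.skel H n (rep σ) = σ := by
    intro σ hσ
    have h := hrepex σ hσ
    simp only [hrepdef, dif_pos h]
    exact h.choose_spec
  set q : (Fin n → Option G) → ℝ :=
    fun σ => ((Ω.filter (fun w => SRP.skel H n w = σ)).card : ℝ) with hqdef
  set P : (Fin n → Option G) → ℝ :=
    fun σ => ((W.filter (fun w => SRP.skel H n w = σ)).card : ℝ) with hPdef
  set Rh : (Fin n → Option G) → ℝ := fun σ => SRP.RRp S H (rep σ) with hRhdef
  have hrepS : ∀ σ ∈ I, ∀ i, rep σ i ∈ S := fun σ hσ i =>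
    hWmem _ (hΩsub (hrep σ hσ).1) i
  have hq1 : ∀ σ ∈ I, 1 ≤ q σ := by
    intro σ hσ
    obtain ⟨hΩr, hskr⟩ := hrep σ hσ
    have hm : rep σ ∈ Ω.filter (fun w => SRP.skel H n w = σ) :=
      Finset.mem_filter.mpr ⟨hΩr, hskr⟩
    have hpos := Finset.card_pos.mpr ⟨rep σ, hm⟩
    have h1 : (1:ℝ) ≤ ((Ω.filter (fun w => SRP.skel H n w = σ)).card : ℝ) := by
      exact_mod_cast hpos
    exact h1
  have hq0 : ∀ σ ∈ I, 0 ≤ q σ := fun σ hσ => le_trans zero_le_one (hq1 σ hσ)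
  have hRpos : ∀ σ ∈ I, 0 < Rh σ := fun σ hσ =>
    SRP.RRp_pos S H hsymm (rep σ) (hrepS σ hσ)
  -- fiber identity
  have hfibH : ∀ σ ∈ I, W.filter (fun w => SRP.skel H n w = σ)
      = Fintype.piFinset (SRP.famA S H n (rep σ)) := by
    intro σ hσ
    obtain ⟨hΩr, hskr⟩ := hrep σ hσ
    have h1 := SRP.fiber_eq_piFinset S H (rep σ) (hrepS σ hσ)
    rw [hskr] at h1
    exact h1
  have hqRP : ∀ σ ∈ I, q σ ≤ Rh σ * P σ := by
    intro σ hσ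
    obtain ⟨hΩr, hskr⟩ := hrep σ hσ
    have hq : Ω.filter (fun w => SRP.skel H n w = σ)
        = (Fintype.piFinset (SRP.famA S H n (rep σ))).filter
            (fun w => (List.ofFn w).prod = 1) := by
      rw [← hfibH σ hσ]
      ext w
      simp only [Finset.mem_filter, hΩdef, wordsIn, Subgroup.mem_bot]
      tauto
    have hcnt := SRP.fiber_card_le S H hsymm (rep σ) (hrepS σ hσ)
    have hP : P σ = ∏ i, ((SRP.famA S H n (rep σ) i).card : ℝ) := by
      rw [hPdef]
      dsimp only
      rw [hfibH σ hσ, Fintype.card_piFinset]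
      push_cast
      rfl
    rw [hqdef]
    dsimp only
    rw [hq, hP, hRhdef]
    exact hcnt
  have hfibsub : ∀ σ ∈ I, W.filter (fun w => SRP.skel H n w = σ) ⊆ wordsIn S H n := by
    intro σ hσ w hw
    obtain ⟨hwW, hwsk⟩ := Finset.mem_filter.mp hw
    obtain ⟨hΩr, hskr⟩ := hrep σ hσ
    refine Finset.mem_filter.mpr ⟨hwW, ?_⟩
    have hsk2 : SRP.skel H n (rep σ) = SRP.skel H n w := by rw [hwsk, hskr]
    have hcos := SRP.coset_of_skel_eq H hsk2 n
    have hrprod : prefixProd (rep σ) n = 1 := by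
      rw [← SRP.prefixProd_top]
      exact hΩprod _ hΩr
    rw [SRP.prefixProd_top w]
    rw [hrprod, inv_one, mul_one] at hcos
    exact hcos
  -- global sums
  have hQcard : (Ω.card : ℝ) = ∑ σ ∈ I, q σ := by
    have h := Finset.card_eq_sum_card_fiberwise
      (f := SRP.skel H n) (s := Ω) (t := I)
      (fun w hw => Finset.mem_image_of_mem (SRP.skel H n) hw)
    rw [hqdef]
    rw [h]
    push_cast
    rfl
  have hQpos : (0:ℝ) < (Ω.card : ℝ) := by exact_mod_cast Finset.card_pos.mpr hne
  have hPsum : ∑ σ ∈ I, P σ ≤ ((wordsIn S H n).card : ℝ) := by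
    have heq : ∀ σ ∈ I, W.filter (fun w => SRP.skel H n w = σ)
        = (wordsIn S H n).filter (fun w => SRP.skel H n w = σ) := by
      intro σ hσ
      apply Finset.Subset.antisymm
      · intro w hw
        exact Finset.mem_filter.mpr ⟨hfibsub σ hσ hw, (Finset.mem_filter.mp hw).2⟩
      · intro w hw
        obtain ⟨hw1, hw2⟩ := Finset.mem_filter.mp hw
        exact Finset.mem_filter.mpr ⟨Finset.filter_subset _ _ hw1, hw2⟩
    have hcard2 : ((wordsIn S H n).filter (fun w => SRP.skel H n w ∈ I)).card
        = ∑ σ ∈ I, (((wordsIn S H n).filter (fun w => SRP.skel H n w ∈ I)).filter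
            (fun w => SRP.skel H n w = σ)).card :=
      Finset.card_eq_sum_card_fiberwise (fun w hw => (Finset.mem_filter.mp hw).2)
    have hinner : ∀ σ ∈ I,
        ((wordsIn S H n).filter (fun w => SRP.skel H n w ∈ I)).filter
            (fun w => SRP.skel H n w = σ)
          = (wordsIn S H n).filter (fun w => SRP.skel H n w = σ) := by
      intro σ hσ
      rw [Finset.filter_filter]
      refine Finset.filter_congr fun w _ => ?_
      constructor
      · rintro ⟨_, h⟩; exact h
      · intro h; exact ⟨h ▸ hσ, h⟩
    calc ∑ σ ∈ I, P σ
        = ∑ σ ∈ I, ((((wordsIn S H n).filter (fun w => SRP.skel H n w ∈ I)).filter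
            (fun w => SRP.skel H n w = σ)).card : ℝ) := by
          refine Finset.sum_congr rfl fun σ hσ => ?_
          rw [hPdef]
          dsimp only
          rw [heq σ hσ, hinner σ hσ]
      _ = (((wordsIn S H n).filter (fun w => SRP.skel H n w ∈ I)).card : ℝ) := by
          rw [hcard2]
          push_cast
          rfl
      _ ≤ ((wordsIn S H n).card : ℝ) := by
          exact_mod_cast Finset.card_filter_le _ _
  have hEsum : ∑ w ∈ Ω, SRP.EE S H w = ∑ σ ∈ I, q σ * (-Real.log (Rh σ)) := by
    have hfib := Finset.sum_fiberwise_of_maps_to (g := SRP.skel H n) (t := I) (s := Ω)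
      (fun w hw => Finset.mem_image_of_mem (SRP.skel H n) hw) (SRP.EE S H)
    rw [← hfib]
    refine Finset.sum_congr rfl fun σ hσ => ?_
    obtain ⟨hΩr, hskr⟩ := hrep σ hσ
    have hval : ∀ w ∈ Ω.filter (fun w => SRP.skel H n w = σ),
        SRP.EE S H w = -Real.log (Rh σ) := by
      intro w hw
      have hwsk := (Finset.mem_filter.mp hw).2
      have hsk2 : SRP.skel H n w = SRP.skel H n (rep σ) := by rw [hwsk, hskr]
      rw [SRP.EE_eq_of_skel S H hsk2, SRP.EE_eq_neg_log S H hsymm (rep σ) (hrepS σ hσ),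
        hRhdef]
    rw [Finset.sum_congr rfl hval, Finset.sum_const, nsmul_eq_mul]
  -- Jensen
  have hInonempty : I.Nonempty := hne.image _
  set pw : (Fin n → Option G) → ℝ := fun σ => q σ / (Ω.card : ℝ) with hpwdef
  set z : (Fin n → Option G) → ℝ := fun σ => 1 / Rh σ with hzdef
  have hpw0 : ∀ σ ∈ I, 0 ≤ pw σ := fun σ hσ => div_nonneg (hq0 σ hσ) hQpos.le
  have hpwsum : ∑ σ ∈ I, pw σ = 1 := by
    rw [hpwdef, ← Finset.sum_div, ← hQcard, div_self hQpos.ne']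
  have hzp : ∀ σ ∈ I, 0 < z σ := fun σ hσ => by
    rw [hzdef]; exact div_pos one_pos (hRpos σ hσ)
  have hgm := Real.geom_mean_le_arith_mean_weighted I pw z hpw0 hpwsum
    (fun σ hσ => (hzp σ hσ).le)
  have hprodpos : 0 < ∏ σ ∈ I, z σ ^ pw σ :=
    Finset.prod_pos fun σ hσ => Real.rpow_pos_of_pos (hzp σ hσ) _
  have hlog1 : ∑ σ ∈ I, pw σ * Real.log (z σ) = Real.log (∏ σ ∈ I, z σ ^ pw σ) := by
    rw [Real.log_prod (fun σ hσ => (Real.rpow_pos_of_pos (hzp σ hσ) _).ne')]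
    exact (Finset.sum_congr rfl fun σ hσ => by rw [Real.log_rpow (hzp σ hσ)]).symm
  have hsum_z_pos : 0 < ∑ σ ∈ I, pw σ * z σ := lt_of_lt_of_le hprodpos hgm
  have hle3 : ∑ σ ∈ I, pw σ * z σ ≤ (∑ σ ∈ I, P σ) / (Ω.card : ℝ) := by
    rw [Finset.sum_div]
    refine Finset.sum_le_sum fun σ hσ => ?_
    have h1 : q σ / Rh σ ≤ P σ := by
      rw [div_le_iff₀ (hRpos σ hσ)]
      rw [mul_comm]
      exact hqRP σ hσ
    have h2 : pw σ * z σ = (q σ / Rh σ) / (Ω.card : ℝ) := by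
      rw [hpwdef, hzdef]
      dsimp only
      ring
    rw [h2]
    exact div_le_div_of_nonneg_right h1 hQpos.le
  have hHpos : 0 < ((wordsIn S H n).card : ℝ) := by
    have hsub : Ω ⊆ wordsIn S H n := by
      intro w hw
      refine Finset.mem_filter.mpr ⟨(Finset.mem_filter.mp hw).1, ?_⟩
      rw [hΩprod w hw]
      exact H.one_mem
    obtain ⟨w, hw⟩ := hne
    have := Finset.card_pos.mpr ⟨w, hsub hw⟩
    exact_mod_cast this
  -- final chain
  have hrhs : (1 / (Ω.card : ℝ)) * ∑ w ∈ Ω, SRP.EE S H w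
      = ∑ σ ∈ I, pw σ * Real.log (z σ) := by
    rw [hEsum, Finset.mul_sum]
    refine Finset.sum_congr rfl fun σ hσ => ?_
    have hlz : Real.log (z σ) = -Real.log (Rh σ) := by
      rw [hzdef]
      dsimp only
      rw [one_div, Real.log_inv]
    rw [hlz, hpwdef]
    dsimp only
    ring
  rw [ge_iff_le, hrhs]
  calc ∑ σ ∈ I, pw σ * Real.log (z σ)
      = Real.log (∏ σ ∈ I, z σ ^ pw σ) := hlog1
    _ ≤ Real.log (∑ σ ∈ I, pw σ * z σ) := Real.log_le_log hprodpos hgm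
    _ ≤ Real.log (((wordsIn S H n).card : ℝ) / (Ω.card : ℝ)) := by
        refine Real.log_le_log hsum_z_pos (le_trans hle3 ?_)
        exact div_le_div_of_nonneg_right hPsum hQpos.le
    _ = Real.log ((wordsIn S H n).card : ℝ) - Real.log ((Ω.card : ℝ)) :=
        Real.log_div hHpos.ne' hQpos.ne'

end
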